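/- With the setting of the semiconcavity of f(s,t) = (1/2)W₂²(exp^s_♯Φ₀, exp^t_♯Φ₁): the one-variable function g(s) := f(s,0) = (1/2) W₂²(exp^s_♯Φ₀, μ₁), where μ₁ = 𝗑_♯Φ₁, satisfies: s ↦ g(s) - (s²/2)∫|v|²dΦ₀ is concave on ℝ. -/

import Mathlib

open MeasureTheory Filter Topology
open scoped RealInnerProductSpace ENNReal

noncomputable section

/-- `γ` is a coupling of `μ` and `ν` if its marginals are `μ` and `ν`. -/
def IsCoupling {α β : Type*} [MeasurableSpace α] [MeasurableSpace β]
    (γ : MeasureTheory.Measure (α × β)) (μ : MeasureTheory.Measure α)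
    (ν : MeasureTheory.Measure β) : Prop :=
  γ.map Prod.fst = μ ∧ γ.map Prod.snd = ν

variable {X : Type*} [NormedAddCommGroup X] [InnerProductSpace ℝ X]
  [MeasurableSpace X] [BorelSpace X]

/-- The squared 2-Wasserstein distance, as the infimum of transport costs over couplings. -/
def W2sq (μ ν : Measure X) : ℝ :=
  sInf {c : ℝ | ∃ γ : Measure (X × X), IsProbabilityMeasure γ ∧ IsCoupling γ μ ν ∧
    c = ∫ p, ‖p.1 - p.2‖ ^ 2 ∂γ}

/-- The 2-Wasserstein distance. -/
def W2 (μ ν : Measure X) : ℝ := Real.sqrt (W2sq μ ν)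

/-- The exponential map `exp^t(x,v) = x + t v` on the tangent bundle `X × X`. -/
def expMap (t : ℝ) : X × X → X := fun p => p.1 + t • p.2

/-- A measure has finite second moment if `‖x‖²` is integrable. -/
def FiniteSecondMoment (μ : Measure X) : Prop := Integrable (fun x => ‖x‖ ^ 2) μ

section Aux

open ProbabilityTheory

set_option linter.unusedSectionVars false

variable [SecondCountableTopology X]

lemma measurable_expMap (s : ℝ) : Measurable (expMap (X := X) s) :=
  measurable_fst.add (measurable_snd.const_smul s)

/-- The set of transport costs is bounded below by `0`. -/
lemma bddBelow_costSet (μ ν : Measure X) :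
    BddBelow {c : ℝ | ∃ γ : Measure (X × X), IsProbabilityMeasure γ ∧ IsCoupling γ μ ν ∧
      c = ∫ p, ‖p.1 - p.2‖ ^ 2 ∂γ} := by
  refine ⟨0, fun c hc => ?_⟩
  obtain ⟨γ, _, _, rfl⟩ := hc
  exact integral_nonneg fun p => by positivity

/-- The set of transport costs is nonempty for probability measures. -/
lemma nonempty_costSet (μ ν : Measure X) [IsProbabilityMeasure μ] [IsProbabilityMeasure ν] :
    ({c : ℝ | ∃ γ : Measure (X × X), IsProbabilityMeasure γ ∧ IsCoupling γ μ ν ∧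
      c = ∫ p, ‖p.1 - p.2‖ ^ 2 ∂γ}).Nonempty := by
  refine ⟨_, μ.prod ν, inferInstance, ⟨?_, ?_⟩, rfl⟩
  · rw [Measure.map_fst_prod]; simp
  · rw [Measure.map_snd_prod]; simp

/-- Easy direction: pushing forward a lifted coupling bounds `W2sq` from above. -/
lemma W2sq_le_cost (Φ₀ : Measure (X × X)) (μ₁ : Measure X)
    (σm : Measure ((X × X) × X)) [IsProbabilityMeasure σm]
    (hf : σm.map Prod.fst = Φ₀) (hsnd : σm.map Prod.snd = μ₁) (s : ℝ) :
    W2sq (Φ₀.map (expMap s)) μ₁ ≤ ∫ q, ‖q.1.1 + s • q.1.2 - q.2‖ ^ 2 ∂σm := by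
  have hmg : Measurable (fun q : (X × X) × X => (expMap s q.1, q.2)) :=
    ((measurable_expMap s).comp measurable_fst).prodMk measurable_snd
  have hcont : Continuous (fun p : X × X => ‖p.1 - p.2‖ ^ 2) :=
    (continuous_fst.sub continuous_snd).norm.pow 2
  have hmem : (∫ q, ‖q.1.1 + s • q.1.2 - q.2‖ ^ 2 ∂σm) ∈
      {c : ℝ | ∃ γ : Measure (X × X), IsProbabilityMeasure γ ∧
        IsCoupling γ (Φ₀.map (expMap s)) μ₁ ∧ c = ∫ p, ‖p.1 - p.2‖ ^ 2 ∂γ} := by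
    refine ⟨σm.map (fun q => (expMap s q.1, q.2)),
      Measure.isProbabilityMeasure_map hmg.aemeasurable, ⟨?_, ?_⟩, ?_⟩
    · rw [Measure.map_map measurable_fst hmg]
      have h1 : (Prod.fst ∘ fun q : (X × X) × X => (expMap s q.1, q.2))
          = expMap s ∘ Prod.fst := rfl
      rw [h1, ← Measure.map_map (measurable_expMap s) measurable_fst, hf]
    · rw [Measure.map_map measurable_snd hmg]
      have h1 : (Prod.snd ∘ fun q : (X × X) × X => (expMap s q.1, q.2))
          = (Prod.snd : (X × X) × X → X) := rfl
      rw [h1, hsnd]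
    · rw [integral_map hmg.aemeasurable hcont.aestronglyMeasurable]
      rfl
  exact csInf_le (bddBelow_costSet _ _) hmem

/-- Lifting: any coupling of `exp^s_♯Φ₀` and `μ₁` lifts to a coupling of `Φ₀` and `μ₁`. -/
lemma lift_coupling [CompleteSpace X] [SecondCountableTopology X]
    (Φ₀ : Measure (X × X)) [IsProbabilityMeasure Φ₀]
    (μ₁ : Measure X) (s : ℝ) (γ : Measure (X × X)) (hγ : IsProbabilityMeasure γ)
    (hγ1 : γ.map Prod.fst = Φ₀.map (expMap s)) (hγ2 : γ.map Prod.snd = μ₁) :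
    ∃ σm : Measure ((X × X) × X), IsProbabilityMeasure σm ∧
      σm.map Prod.fst = Φ₀ ∧ σm.map Prod.snd = μ₁ ∧
      ∫ q, ‖q.1.1 + s • q.1.2 - q.2‖ ^ 2 ∂σm = ∫ p, ‖p.1 - p.2‖ ^ 2 ∂γ := by
  classical
  set ρ : Measure (X × (X × X)) := Φ₀.map (fun p => (expMap s p, p)) with hρ
  have hmpair : Measurable (fun p : X × X => (expMap s p, p)) :=
    (measurable_expMap s).prodMk measurable_id
  haveI : IsProbabilityMeasure ρ := Measure.isProbabilityMeasure_map hmpair.aemeasurable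
  set κ := ρ.condKernel with hκ
  have hdis : ρ.fst ⊗ₘ κ = ρ := ρ.disintegrate κ
  have hfst : ρ.fst = Φ₀.map (expMap s) := by
    show ρ.map Prod.fst = _
    rw [hρ, Measure.map_map measurable_fst hmpair]
    rfl
  set κ' : Kernel (X × X) (X × X) := κ.comap Prod.fst measurable_fst with hκ'
  haveI : IsMarkovKernel κ' := by
    constructor; intro a
    rw [Kernel.comap_apply]
    infer_instance
  haveI : SFinite γ := inferInstance
  set τ : Measure ((X × X) × (X × X)) := γ ⊗ₘ κ' with hτ
  haveI : IsProbabilityMeasure τ := ⟨by rw [hτ, Measure.compProd_apply_univ]; simp⟩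
  -- the map defining σm
  have hmq : Measurable (fun q : (X × X) × (X × X) => (q.2, q.1.2)) :=
    measurable_snd.prodMk (measurable_snd.comp measurable_fst)
  refine ⟨τ.map (fun q => (q.2, q.1.2)), Measure.isProbabilityMeasure_map hmq.aemeasurable, ?_, ?_, ?_⟩
  · -- first marginal is Φ₀
    rw [Measure.map_map measurable_fst hmq]
    have hsnd : (fun q : (X × X) × (X × X) => q.2) = Prod.snd := rfl
    show τ.map (fun q => q.2) = Φ₀
    ext A hA
    rw [Measure.map_apply measurable_snd hA, hτ,
      Measure.compProd_apply (measurable_snd hA)]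
    have h1 : ∀ p : X × X, κ' p (Prod.mk p ⁻¹' (Prod.snd ⁻¹' A)) = κ p.1 A := by
      intro p; rw [hκ', Kernel.comap_apply]; congr 1
    rw [lintegral_congr h1]
    rw [← lintegral_map (κ.measurable_coe hA) measurable_fst, hγ1, ← hfst]
    have h2 : ∫⁻ x, κ x A ∂ρ.fst = (ρ.fst ⊗ₘ κ) (Prod.snd ⁻¹' A) := by
      rw [Measure.compProd_apply (measurable_snd hA)]
      exact lintegral_congr fun x => rfl
    rw [h2, hdis, hρ, Measure.map_apply hmpair (measurable_snd hA)]
    rfl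
  · -- second marginal is μ₁
    rw [Measure.map_map measurable_snd hmq]
    have : (Prod.snd ∘ fun q : (X × X) × (X × X) => (q.2, q.1.2)) =
        (Prod.snd ∘ Prod.fst) := rfl
    rw [this, ← Measure.map_map measurable_snd measurable_fst]
    have hfstτ : τ.fst = γ := Measure.fst_compProd γ κ'
    have hfstτ' : τ.map Prod.fst = γ := hfstτ
    rw [hfstτ', hγ2]
  · -- cost identity
    have hEm : Measurable (fun z : X × (X × X) => z.2.1 + s • z.2.2) :=
      (measurable_fst.comp measurable_snd).add
        ((measurable_snd.comp measurable_snd).const_smul s)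
    have hE : MeasurableSet {z : X × (X × X) | z.2.1 + s • z.2.2 = z.1} :=
      measurableSet_eq_fun hEm measurable_fst
    have hρae : ∀ᵐ z ∂ρ, z.2.1 + s • z.2.2 = z.1 := by
      rw [hρ, ae_map_iff hmpair.aemeasurable hE]
      filter_upwards with p
      rfl
    have hae2 : ∀ᵐ x ∂ρ.fst, ∀ᵐ p ∂κ x, p.1 + s • p.2 = x := by
      rw [← hdis] at hρae
      exact Measure.ae_ae_of_ae_compProd hρae
    have hPmeas : Measurable (fun x : X =>
        κ x (Prod.mk x ⁻¹' {z : X × (X × X) | z.2.1 + s • z.2.2 = z.1}ᶜ)) :=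
      Kernel.measurable_kernel_prodMk_left hE.compl
    have hae2' : ∀ᵐ x ∂ρ.fst,
        κ x (Prod.mk x ⁻¹' {z : X × (X × X) | z.2.1 + s • z.2.2 = z.1}ᶜ) = 0 := by
      filter_upwards [hae2] with x hx
      rw [ae_iff] at hx
      exact hx
    have hγae : ∀ᵐ pr ∂γ,
        κ pr.1 (Prod.mk pr.1 ⁻¹' {z : X × (X × X) | z.2.1 + s • z.2.2 = z.1}ᶜ) = 0 := by
      have h3 : ∀ᵐ x ∂(γ.map Prod.fst),
          κ x (Prod.mk x ⁻¹' {z : X × (X × X) | z.2.1 + s • z.2.2 = z.1}ᶜ) = 0 := by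
        rw [hγ1, ← hfst]; exact hae2'
      exact (ae_map_iff measurable_fst.aemeasurable
        (hPmeas (measurableSet_singleton 0))).mp h3
    have hτae : ∀ᵐ q ∂τ, q.2.1 + s • q.2.2 = q.1.1 := by
      rw [hτ]
      refine Measure.ae_compProd_of_ae_ae ?_ ?_
      · exact measurableSet_eq_fun
          ((measurable_fst.comp measurable_snd).add
            ((measurable_snd.comp measurable_snd).const_smul s))
          (measurable_fst.comp measurable_fst)
      · filter_upwards [hγae] with pr hpr
        rw [hκ', Kernel.comap_apply, ae_iff]
        exact hpr
    have hcont : Continuous (fun q : (X × X) × X => ‖q.1.1 + s • q.1.2 - q.2‖ ^ 2) :=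
      (((continuous_fst.fst.add (continuous_fst.snd.const_smul s)).sub
        continuous_snd).norm.pow 2)
    rw [integral_map hmq.aemeasurable hcont.aestronglyMeasurable]
    have hfstτ : τ.map Prod.fst = γ := Measure.fst_compProd γ κ'
    have hcont2 : Continuous (fun p : X × X => ‖p.1 - p.2‖ ^ 2) :=
      ((continuous_fst.sub continuous_snd).norm.pow 2)
    have step1 : ∫ q, ‖q.2.1 + s • q.2.2 - q.1.2‖ ^ 2 ∂τ
        = ∫ q : (X × X) × (X × X), ‖q.1.1 - q.1.2‖ ^ 2 ∂τ := by
      refine integral_congr_ae ?_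
      filter_upwards [hτae] with q hq
      rw [hq]
    rw [step1, ← hfstτ, integral_map measurable_fst.aemeasurable
      hcont2.aestronglyMeasurable]

/-- The transport cost of a lifted coupling is a quadratic polynomial in `s` with leading
coefficient `∫ ‖v‖² dΦ₀`. -/
lemma cost_affine (Φ₀ : Measure (X × X)) (μ₁ : Measure X)
    (σm : Measure ((X × X) × X)) [IsProbabilityMeasure σm]
    (hf : σm.map Prod.fst = Φ₀) (hsnd : σm.map Prod.snd = μ₁)
    (hi0 : Integrable (fun p : X × X => ‖p.1‖ ^ 2 + ‖p.2‖ ^ 2) Φ₀)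
    (hi1 : Integrable (fun x => ‖x‖ ^ 2) μ₁) :
    ∃ A B : ℝ, ∀ s : ℝ,
      ∫ q, ‖q.1.1 + s • q.1.2 - q.2‖ ^ 2 ∂σm
        = A + s * B + s ^ 2 * ∫ p, ‖p.2‖ ^ 2 ∂Φ₀ := by
  have hcont0 : Continuous (fun p : X × X => ‖p.1‖ ^ 2 + ‖p.2‖ ^ 2) :=
    (continuous_fst.norm.pow 2).add (continuous_snd.norm.pow 2)
  have h0' : Integrable (fun q : (X × X) × X => ‖q.1.1‖ ^ 2 + ‖q.1.2‖ ^ 2) σm := by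
    have := (integrable_map_measure hcont0.aestronglyMeasurable
      measurable_fst.aemeasurable).mp (hf ▸ hi0)
    exact this
  have h1' : Integrable (fun q : (X × X) × X => ‖q.2‖ ^ 2) σm := by
    have := (integrable_map_measure (continuous_norm.pow 2).aestronglyMeasurable
      measurable_snd.aemeasurable).mp (hsnd ▸ hi1)
    exact this
  have ha : Integrable (fun q : (X × X) × X => ‖q.1.1‖ ^ 2) σm := by
    refine h0'.mono ((continuous_fst.fst.norm.pow 2).aestronglyMeasurable) ?_
    filter_upwards with q
    rw [Real.norm_eq_abs, Real.norm_eq_abs, abs_of_nonneg (by positivity),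
      abs_of_nonneg (by positivity)]
    nlinarith [sq_nonneg ‖q.1.2‖]
  have hv : Integrable (fun q : (X × X) × X => ‖q.1.2‖ ^ 2) σm := by
    refine h0'.mono ((continuous_fst.snd.norm.pow 2).aestronglyMeasurable) ?_
    filter_upwards with q
    rw [Real.norm_eq_abs, Real.norm_eq_abs, abs_of_nonneg (by positivity),
      abs_of_nonneg (by positivity)]
    nlinarith [sq_nonneg ‖q.1.1‖]
  have IA : Integrable (fun q : (X × X) × X => ‖q.1.1 - q.2‖ ^ 2) σm := by
    refine ((ha.const_mul 2).add (h1'.const_mul 2)).mono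
      (((continuous_fst.fst.sub continuous_snd).norm.pow 2).aestronglyMeasurable) ?_
    filter_upwards with q
    simp only [Pi.add_apply]
    rw [Real.norm_eq_abs, Real.norm_eq_abs, abs_of_nonneg (by positivity),
      abs_of_nonneg (by positivity)]
    nlinarith [norm_sub_le q.1.1 q.2, norm_nonneg q.1.1, norm_nonneg q.2,
      sq_nonneg (‖q.1.1‖ - ‖q.2‖), norm_nonneg (q.1.1 - q.2)]
  have IB : Integrable (fun q : (X × X) × X => ⟪q.1.1 - q.2, q.1.2⟫) σm := by
    refine (IA.add hv).mono
      ((Continuous.inner (continuous_fst.fst.sub continuous_snd)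
        continuous_fst.snd).aestronglyMeasurable) ?_
    filter_upwards with q
    simp only [Pi.add_apply]
    rw [Real.norm_eq_abs, Real.norm_eq_abs,
      abs_of_nonneg (show (0:ℝ) ≤ ‖q.1.1 - q.2‖ ^ 2 + ‖q.1.2‖ ^ 2 by positivity)]
    have h1 := abs_real_inner_le_norm (q.1.1 - q.2) q.1.2
    nlinarith [sq_nonneg (‖q.1.1 - q.2‖ - ‖q.1.2‖), norm_nonneg (q.1.1 - q.2),
      norm_nonneg q.1.2]
  have hCint : ∫ q, ‖q.1.2‖ ^ 2 ∂σm = ∫ p, ‖p.2‖ ^ 2 ∂Φ₀ := by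
    rw [← hf, integral_map (f := fun p : X × X => ‖p.2‖ ^ 2) measurable_fst.aemeasurable
      (continuous_snd.norm.pow 2).aestronglyMeasurable]
  refine ⟨∫ q, ‖q.1.1 - q.2‖ ^ 2 ∂σm, 2 * ∫ q, ⟪q.1.1 - q.2, q.1.2⟫ ∂σm, fun s => ?_⟩
  have key : ∀ q : (X × X) × X, ‖q.1.1 + s • q.1.2 - q.2‖ ^ 2
      = ‖q.1.1 - q.2‖ ^ 2 + s * (2 * ⟪q.1.1 - q.2, q.1.2⟫) + s ^ 2 * ‖q.1.2‖ ^ 2 := by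
    intro q
    have h1 : q.1.1 + s • q.1.2 - q.2 = (q.1.1 - q.2) + s • q.1.2 := add_sub_right_comm _ _ _
    rw [h1, norm_add_sq_real, real_inner_smul_right, norm_smul]
    simp only [Real.norm_eq_abs, mul_pow, sq_abs]
    ring
  simp_rw [key]
  have IsB : Integrable (fun q : (X × X) × X => s * (2 * ⟪q.1.1 - q.2, q.1.2⟫)) σm :=
    (IB.const_mul 2).const_mul s
  have IsC : Integrable (fun q : (X × X) × X => s ^ 2 * ‖q.1.2‖ ^ 2) σm :=
    hv.const_mul (s ^ 2)
  have I12 : Integrable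
      (fun q : (X × X) × X => ‖q.1.1 - q.2‖ ^ 2 + s * (2 * ⟪q.1.1 - q.2, q.1.2⟫)) σm :=
    IA.add IsB
  rw [integral_add I12 IsC, integral_add IA IsB,
    integral_const_mul, integral_const_mul, integral_const_mul, hCint]

end Aux

/-- Semiconcavity in one variable: `s ↦ (1/2)W₂²(exp^s_♯Φ₀, μ₁) - (s²/2)∫‖v‖²dΦ₀`
is concave on `ℝ`. -/
theorem semiconcavity_W2sq_expMap_one_var
    [CompleteSpace X] [SecondCountableTopology X]
    (Φ₀ : Measure (X × X)) (μ₁ : Measure X)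
    (h0 : IsProbabilityMeasure Φ₀) (h1 : IsProbabilityMeasure μ₁)
    (hi0 : Integrable (fun p : X × X => ‖p.1‖ ^ 2 + ‖p.2‖ ^ 2) Φ₀)
    (hi1 : FiniteSecondMoment μ₁) :
    ConcaveOn ℝ Set.univ (fun s : ℝ =>
      (1 / 2) * W2sq (Φ₀.map (expMap s)) μ₁ -
        (s ^ 2 / 2) * ∫ p, ‖p.2‖ ^ 2 ∂Φ₀) := by
  haveI := h0; haveI := h1
  refine ⟨convex_univ, ?_⟩
  intro x _ y _ a b ha hb hab
  simp only [smul_eq_mul]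
  set C := ∫ p, ‖p.2‖ ^ 2 ∂Φ₀ with hC
  set s := a * x + b * y with hs
  haveI : IsProbabilityMeasure (Φ₀.map (expMap s)) :=
    Measure.isProbabilityMeasure_map (measurable_expMap s).aemeasurable
  have key : 2 * (a * ((1 / 2) * W2sq (Φ₀.map (expMap x)) μ₁ - x ^ 2 / 2 * C)
        + b * ((1 / 2) * W2sq (Φ₀.map (expMap y)) μ₁ - y ^ 2 / 2 * C)) + s ^ 2 * C
      ≤ W2sq (Φ₀.map (expMap s)) μ₁ := by
    conv_rhs => rw [W2sq]
    refine le_csInf (nonempty_costSet _ _) ?_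
    rintro c ⟨γ, hγp, ⟨hγ1, hγ2⟩, rfl⟩
    obtain ⟨σm, hσp, hσ1, hσ2, hcost⟩ := lift_coupling Φ₀ μ₁ s γ hγp hγ1 hγ2
    haveI := hσp
    obtain ⟨A, B, hAB⟩ := cost_affine Φ₀ μ₁ σm hσ1 hσ2 hi0 hi1
    have hcx := W2sq_le_cost Φ₀ μ₁ σm hσ1 hσ2 x
    have hcy := W2sq_le_cost Φ₀ μ₁ σm hσ1 hσ2 y
    rw [hAB x] at hcx
    rw [hAB y] at hcy
    rw [← hC] at hcx hcy
    have h1 := mul_le_mul_of_nonneg_left hcx ha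
    have h2 := mul_le_mul_of_nonneg_left hcy hb
    have expand : A + s * B + s ^ 2 * C
        = a * (A + x * B + x ^ 2 * C) + b * (A + y * B + y ^ 2 * C)
          - a * x ^ 2 * C - b * y ^ 2 * C + s ^ 2 * C := by
      rw [hs]; linear_combination (-(A : ℝ)) * hab
    rw [← hcost, hAB s, ← hC, expand]
    linarith [h1, h2]
  linarith [key]

end
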